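/- Satisfaction in the deep assertion logic is upward closed in the resource component: for every assertion formula φ, every environment η, every heap H and all consumable resources r, r', if η, (H, r) ⊨ φ and r ⊑ r', then η, (H, r') ⊨ φ. -/
import Mathlib


/-- An ordered commutative monoid of consumable resources, whose unit is the
least element and whose operation is monotone. -/
structure ResMon : Type 1 where
  carrier : Type
  le : carrier → carrier → Prop
  op : carrier → carrier → carrier
  e : carrier
  le_refl : ∀ r, le r r
  le_trans : ∀ {a b c}, le a b → le b c → le a c
  op_comm : ∀ a b, op a b = op b a
  op_assoc : ∀ a b c, op (op a b) c = op a (op b c)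
  op_e : ∀ a, op a e = a
  e_le : ∀ a, le e a
  op_mono : ∀ {a b c d}, le a b → le c d → le (op a c) (op b d)

/-- Values: possibly-null addresses and integers. -/
inductive Val (A : Type) where
  | addr : Option A → Val A
  | int : ℤ → Val A

/-- The null value. -/
def Val.null {A : Type} : Val A := .addr none

/-- Heaps: finite partial maps from (address, field name) pairs to values. -/
abbrev Heap (A F : Type) : Type := Finmap (fun _ : A × F => Val A)

/-- Terms of the assertion logic: logical variables and the constant null. -/
inductive Term where
  | var (x : ℕ)
  | null

/-- Interpretation of terms in an environment. -/
def Term.eval {A : Type} (η : ℕ → Val A) : Term → Val A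
  | .var x => η x
  | .null => .addr none

/-- Formulae of the deep assertion logic. -/
inductive Formula (F R : Type) where
  | tt
  | eq (t₁ t₂ : Term)
  | ne (t₁ t₂ : Term)
  | and (φ₁ φ₂ : Formula F R)
  | or (φ₁ φ₂ : Formula F R)
  | imp (φ₁ φ₂ : Formula F R)
  | emp
  | star (φ₁ φ₂ : Formula F R)
  | wand (φ₁ φ₂ : Formula F R)
  | all (x : ℕ) (φ : Formula F R)
  | ex (x : ℕ) (φ : Formula F R)
  | points (t₁ : Term) (f : F) (t₂ : Term)
  | res (r : R)

/-- The semantics of the deep assertion logic (Figure 6):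
`Sat M φ η H r` is `η, (H, r) ⊨ φ`. -/
def Sat (M : ResMon) {A F : Type} [DecidableEq A] [DecidableEq F] :
    Formula F M.carrier → (ℕ → Val A) → Heap A F → M.carrier → Prop
  | .tt => fun _ _ _ => True
  | .eq t₁ t₂ => fun η _ _ => t₁.eval η = t₂.eval η
  | .ne t₁ t₂ => fun η _ _ => t₁.eval η ≠ t₂.eval η
  | .and φ₁ φ₂ => fun η H r => Sat M φ₁ η H r ∧ Sat M φ₂ η H r
  | .or φ₁ φ₂ => fun η H r => Sat M φ₁ η H r ∨ Sat M φ₂ η H r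
  | .imp φ₁ φ₂ => fun η H r => ∀ r', M.le r r' → Sat M φ₁ η H r' → Sat M φ₂ η H r'
  | .emp => fun _ H _ => H = ∅
  | .star φ₁ φ₂ => fun η H r =>
      ∃ (H₁ H₂ : Heap A F) (r₁ r₂ : M.carrier),
        H₁.Disjoint H₂ ∧ H₁ ∪ H₂ = H ∧ M.le (M.op r₁ r₂) r ∧
        Sat M φ₁ η H₁ r₁ ∧ Sat M φ₂ η H₂ r₂
  | .wand φ₁ φ₂ => fun η H r =>
      ∀ (H' H'' : Heap A F) (r' r'' : M.carrier),
        H.Disjoint H' → H ∪ H' = H'' → M.le (M.op r r') r'' →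
        Sat M φ₁ η H' r' → Sat M φ₂ η H'' r''
  | .all x φ => fun η H r => ∀ v : Val A, Sat M φ (Function.update η x v) H r
  | .ex x φ => fun η H r => ∃ v : Val A, Sat M φ (Function.update η x v) H r
  | .points t₁ f t₂ => fun η H _ =>
      ∃ a : A, t₁.eval η = .addr (some a) ∧ H = Finmap.singleton (a, f) (t₂.eval η)
  | .res r₀ => fun _ H r => H = ∅ ∧ M.le r₀ r

/-- **Theorem.** Satisfaction in the deep assertion logic is upward closed in the
resource component: if `η, (H, r) ⊨ φ` and `r ⊑ r'` then `η, (H, r') ⊨ φ`. -/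
theorem sat_resource_mono (M : ResMon) {A F : Type} [DecidableEq A] [DecidableEq F]
    (φ : Formula F M.carrier) (η : ℕ → Val A) (H : Heap A F) (r r' : M.carrier)
    (hsat : Sat M φ η H r) (hle : M.le r r') :
    Sat M φ η H r' := by
  induction φ generalizing η H r r' with
  | tt => trivial
  | eq t₁ t₂ => exact hsat
  | ne t₁ t₂ => exact hsat
  | and φ₁ φ₂ ih₁ ih₂ => exact ⟨ih₁ η H r r' hsat.1 hle, ih₂ η H r r' hsat.2 hle⟩
  | or φ₁ φ₂ ih₁ ih₂ =>
    exact hsat.elim (fun h => Or.inl (ih₁ η H r r' h hle))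
      (fun h => Or.inr (ih₂ η H r r' h hle))
  | imp φ₁ φ₂ ih₁ ih₂ =>
    exact fun r'' h12 h1 => hsat r'' (M.le_trans hle h12) h1
  | emp => exact hsat
  | star φ₁ φ₂ ih₁ ih₂ =>
    obtain ⟨H₁, H₂, r₁, r₂, hd, hu, hc, h1, h2⟩ := hsat
    exact ⟨H₁, H₂, r₁, r₂, hd, hu, M.le_trans hc hle, h1, h2⟩
  | wand φ₁ φ₂ ih₁ ih₂ =>
    intro Ha Hb ra rb hd hu hc h1
    exact hsat Ha Hb ra rb hd hu (M.le_trans (M.op_mono hle (M.le_refl ra)) hc) h1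
  | all x φ ih => exact fun v => ih _ H r r' (hsat v) hle
  | ex x φ ih => obtain ⟨v, h⟩ := hsat; exact ⟨v, ih _ H r r' h hle⟩
  | points t₁ f t₂ => exact hsat
  | res r₀ => exact ⟨hsat.1, M.le_trans hsat.2 hle⟩
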